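/- Let L ≥ 1 be an integer, 0 ≤ p ≤ q ≤ 1 reals, and suppose b_norm := ∑_{M ∈ {0,…,L}, M < Lq} 𝔟_{L,p}(M) > 0. Define r : {0,…,L} → ℝ by r(M) = 𝔟_{L,q}(M)/b_norm for M < Lq and r(M) = (𝔟_{L,q}(M) − 𝔟_{L,p}(M))/b_norm for M ≥ Lq, and define the stochastic map S on pmfs over {0,…,L} by S(P)(M') = ∑_M Pr(M'|M)·P(M), where Pr(M'|M) = r(M') if M < Lq and Pr(M'|M) = δ_{M'M} if M ≥ Lq. Then r is a pmf on {0,…,L} (in particular r(M) ≥ 0 for all M), S maps pmfs to pmfs, and S(𝔟_{L,p}) = 𝔟_{L,q}. -/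

import Mathlib

open Finset

/-- The binomial pmf with `L` trials and success probability `p`. -/
noncomputable def binomPmf (L : ℕ) (p : ℝ) (M : ℕ) : ℝ :=
  (Nat.choose L M : ℝ) * p ^ M * (1 - p) ^ (L - M)

lemma binom_sum (L : ℕ) (x : ℝ) : ∑ M ∈ range (L+1), binomPmf L x M = 1 := by
  have h := add_pow x (1 - x) L
  simp only [add_sub_cancel, one_pow] at h
  rw [h]
  exact Finset.sum_congr rfl fun M _ => by unfold binomPmf; ring

lemma binom_nonneg (L M : ℕ) (x : ℝ) (h0 : 0 ≤ x) (h1 : x ≤ 1) : 0 ≤ binomPmf L x M := by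
  unfold binomPmf
  have : (0:ℝ) ≤ 1 - x := by linarith
  positivity

lemma pow_mono_key (L M : ℕ) (hL : 1 ≤ L) (hML : M ≤ L) (p q : ℝ)
    (hp : 0 ≤ p) (hpq : p ≤ q) (hq1 : q ≤ 1) (hLq : (L:ℝ) * q ≤ M) :
    p ^ M * (1 - p) ^ (L - M) ≤ q ^ M * (1 - q) ^ (L - M) := by
  rcases Nat.eq_zero_or_pos M with hM0 | hM1
  · subst hM0
    have h1L : (1:ℝ) ≤ L := by exact_mod_cast hL
    have hq0 : q ≤ 0 := by
      by_contra hcon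
      push_neg at hcon
      push_cast at hLq
      nlinarith [mul_nonneg (by linarith : (0:ℝ) ≤ (L:ℝ) - 1) hcon.le]
    have : p = q := le_antisymm hpq (hq0.trans hp)
    subst this; rfl
  set f : ℝ → ℝ := fun x => x ^ M * (1 - x) ^ (L - M) with hf
  have hderiv : ∀ x : ℝ, HasDerivAt f
      ((M * x ^ (M-1)) * (1 - x) ^ (L - M)
        + x ^ M * (((L - M : ℕ) : ℝ) * (1 - x) ^ (L - M - 1) * (-1))) x := by
    intro x
    have : HasDerivAt (fun y : ℝ => y ^ M * (1 - y) ^ (L - M)) _ x := (hasDerivAt_pow M x).mul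
      (((hasDerivAt_const x (1:ℝ)).sub (hasDerivAt_id x)).pow (L - M))
    simpa using this
  have hmono : MonotoneOn f (Set.Icc (0:ℝ) q) := by
    apply monotoneOn_of_deriv_nonneg (convex_Icc 0 q)
    · exact (Continuous.mul (continuous_pow M)
        ((continuous_const.sub continuous_id).pow _)).continuousOn
    · intro x _
      exact (hderiv x).differentiableAt.differentiableWithinAt
    · intro x hx
      rw [interior_Icc] at hx
      rw [(hderiv x).deriv]
      obtain ⟨hx0, hxq⟩ := hx
      have hx1 : x < 1 := lt_of_lt_of_le hxq hq1
      rcases Nat.eq_or_lt_of_le hML with hLM | hLM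
      · subst hLM
        simp only [Nat.sub_self, pow_zero, Nat.cast_zero, zero_mul, mul_zero, neg_zero,
          add_zero, mul_one]
        exact mul_nonneg (Nat.cast_nonneg _) (pow_nonneg hx0.le _)
      · have hLM1 : 1 ≤ L - M := by omega
        have e1 : x ^ M = x ^ (M-1) * x := by
          rw [← pow_succ, Nat.sub_add_cancel hM1]
        have e2 : (1 - x) ^ (L - M) = (1 - x) ^ (L - M - 1) * (1 - x) := by
          rw [← pow_succ, Nat.sub_add_cancel hLM1]
        rw [e1, e2, Nat.cast_sub hML]
        have h1 : (0:ℝ) ≤ x ^ (M-1) := pow_nonneg hx0.le _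
        have h2 : (0:ℝ) ≤ (1 - x) ^ (L - M - 1) := pow_nonneg (by linarith) _
        have h3 : (L:ℝ) * x ≤ M := by
          have : (L:ℝ) * x ≤ (L:ℝ) * q :=
            mul_le_mul_of_nonneg_left hxq.le (Nat.cast_nonneg L)
          linarith
        nlinarith [mul_nonneg (mul_nonneg h1 h2) (sub_nonneg.mpr h3)]
  exact hmono ⟨hp, hpq⟩ ⟨hp.trans hpq, le_refl q⟩ hpq

lemma binom_mono (L M : ℕ) (hL : 1 ≤ L) (hML : M ≤ L) (p q : ℝ)
    (hp : 0 ≤ p) (hpq : p ≤ q) (hq1 : q ≤ 1) (hLq : (L:ℝ) * q ≤ M) :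
    binomPmf L p M ≤ binomPmf L q M := by
  unfold binomPmf
  rw [mul_assoc, mul_assoc]
  exact mul_le_mul_of_nonneg_left (pow_mono_key L M hL hML p q hp hpq hq1 hLq)
    (Nat.cast_nonneg _)


/-- the map `r` is a pmf on `{0,…,L}`, the stochastic map `S`
maps pmfs on `{0,…,L}` to pmfs on `{0,…,L}`, and `S(𝔟_{L,p}) = 𝔟_{L,q}`. -/
theorem stmt_5 (L : ℕ) (hL : 1 ≤ L) (p q : ℝ)
    (hp0 : 0 ≤ p) (hpq : p ≤ q) (hq1 : q ≤ 1)
    (bnorm : ℝ)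
    (hbnorm : bnorm = ∑ M ∈ (Finset.range (L + 1)).filter (fun M : ℕ => (M : ℝ) < (L : ℝ) * q),
      binomPmf L p M)
    (hbpos : 0 < bnorm)
    (r : ℕ → ℝ)
    (hr : ∀ M, r M = if (M : ℝ) < (L : ℝ) * q then binomPmf L q M / bnorm
      else (binomPmf L q M - binomPmf L p M) / bnorm)
    (S : (ℕ → ℝ) → (ℕ → ℝ))
    (hS : ∀ P M', S P M' = ∑ M ∈ Finset.range (L + 1),
      (if (M : ℝ) < (L : ℝ) * q then r M' else if M' = M then 1 else 0) * P M) :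
    -- `r` is a pmf on `{0,…,L}` (in particular `r M ≥ 0`)
    ((∀ M ∈ Finset.range (L + 1), 0 ≤ r M) ∧ ∑ M ∈ Finset.range (L + 1), r M = 1) ∧
    -- `S` maps pmfs on `{0,…,L}` to pmfs on `{0,…,L}`
    (∀ P : ℕ → ℝ, (∀ M ∈ Finset.range (L + 1), 0 ≤ P M) →
      ∑ M ∈ Finset.range (L + 1), P M = 1 →
      ((∀ M ∈ Finset.range (L + 1), 0 ≤ S P M) ∧ ∑ M ∈ Finset.range (L + 1), S P M = 1)) ∧
    -- `S(𝔟_{L,p}) = 𝔟_{L,q}`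
    (∀ M ∈ Finset.range (L + 1), S (fun M' => binomPmf L p M') M = binomPmf L q M) := by
  have hq0 : 0 ≤ q := hp0.trans hpq
  have hbne : bnorm ≠ 0 := ne_of_gt hbpos
  have hsplit : ∀ g : ℕ → ℝ, ∑ M ∈ range (L+1), g M =
      (∑ M ∈ (range (L+1)).filter (fun M : ℕ => (M : ℝ) < (L : ℝ) * q), g M) +
      ∑ M ∈ (range (L+1)).filter (fun M : ℕ => ¬ ((M : ℝ) < (L : ℝ) * q)), g M := fun g =>
    (sum_filter_add_sum_filter_not (range (L+1)) (fun M : ℕ => (M : ℝ) < (L : ℝ) * q) g).symm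
  have hBp : ∑ M ∈ (range (L+1)).filter (fun M : ℕ => ¬ ((M : ℝ) < (L : ℝ) * q)),
      binomPmf L p M = 1 - bnorm := by
    have h := hsplit (binomPmf L p)
    rw [binom_sum] at h
    rw [hbnorm]
    linarith [h]
  -- r nonneg
  have hr_nonneg : ∀ M ∈ range (L + 1), 0 ≤ r M := by
    intro M hM
    rw [hr]
    split_ifs with h
    · exact div_nonneg (binom_nonneg L M q hq0 hq1) hbpos.le
    · apply div_nonneg _ hbpos.le
      have hML : M ≤ L := by
        rw [mem_range] at hM; omega
      have hLq : (L:ℝ) * q ≤ M := le_of_not_gt h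
      linarith [binom_mono L M hL hML p q hp0 hpq hq1 hLq]
  -- r sums to 1
  have hr_sum : ∑ M ∈ range (L + 1), r M = 1 := by
    rw [hsplit r]
    have h1 : ∑ M ∈ (range (L+1)).filter (fun M : ℕ => (M : ℝ) < (L : ℝ) * q), r M =
        (∑ M ∈ (range (L+1)).filter (fun M : ℕ => (M : ℝ) < (L : ℝ) * q), binomPmf L q M) / bnorm := by
      rw [sum_div]
      exact sum_congr rfl fun M hM => by
        rw [hr]; rw [mem_filter] at hM; rw [if_pos hM.2]
    have h2 : ∑ M ∈ (range (L+1)).filter (fun M : ℕ => ¬ ((M : ℝ) < (L : ℝ) * q)), r M =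
        ((∑ M ∈ (range (L+1)).filter (fun M : ℕ => ¬ ((M : ℝ) < (L : ℝ) * q)), binomPmf L q M)
          - (1 - bnorm)) / bnorm := by
      rw [← hBp, ← sum_sub_distrib, sum_div]
      exact sum_congr rfl fun M hM => by
        rw [hr]; rw [mem_filter] at hM; rw [if_neg hM.2]
    rw [h1, h2]
    have hq_split := hsplit (binomPmf L q)
    rw [binom_sum] at hq_split
    rw [← add_div, div_eq_one_iff_eq hbne]
    linarith [hq_split]
  -- structural formula for S
  have hS' : ∀ P : ℕ → ℝ, ∀ M' ∈ range (L + 1), S P M' =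
      r M' * (∑ M ∈ (range (L+1)).filter (fun M : ℕ => (M : ℝ) < (L : ℝ) * q), P M) +
      (if (M' : ℝ) < (L : ℝ) * q then 0 else P M') := by
    intro P M' hM'
    rw [hS, ← sum_filter_add_sum_filter_not (range (L+1)) (fun M : ℕ => (M : ℝ) < (L : ℝ) * q)]
    congr 1
    · rw [mul_sum]
      exact sum_congr rfl fun M hM => by
        rw [mem_filter] at hM
        rw [if_pos hM.2]
    · have e : ∀ M ∈ (range (L+1)).filter (fun M : ℕ => ¬ ((M : ℝ) < (L : ℝ) * q)),
          (if (M : ℝ) < (L : ℝ) * q then r M' else if M' = M then 1 else 0) * P M =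
          if M' = M then P M else 0 := by
        intro M hM
        rw [mem_filter] at hM
        rw [if_neg hM.2]
        split_ifs <;> ring
      rw [sum_congr rfl e, sum_ite_eq]
      by_cases hmem : M' ∈ (range (L+1)).filter (fun M : ℕ => ¬ ((M : ℝ) < (L : ℝ) * q))
      · rw [if_pos hmem, if_neg (mem_filter.mp hmem).2]
      · rw [if_neg hmem]
        have hlt : (M' : ℝ) < (L : ℝ) * q := by
          by_contra hc
          exact hmem (mem_filter.mpr ⟨hM', hc⟩)
        rw [if_pos hlt]
  refine ⟨⟨hr_nonneg, hr_sum⟩, ?_, ?_⟩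
  · intro P hP hPsum
    have hAP : 0 ≤ ∑ M ∈ (range (L+1)).filter (fun M : ℕ => (M : ℝ) < (L : ℝ) * q), P M :=
      sum_nonneg fun M hM => hP M (mem_of_mem_filter M hM)
    constructor
    · intro M hM
      rw [hS' P M hM]
      apply add_nonneg (mul_nonneg (hr_nonneg M hM) hAP)
      split_ifs with h
      · exact le_refl 0
      · exact hP M hM
    · rw [sum_congr rfl (hS' P), sum_add_distrib, ← sum_mul, hr_sum, one_mul]
      have e2 : ∑ M ∈ range (L+1), (if (M : ℝ) < (L : ℝ) * q then 0 else P M) =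
          ∑ M ∈ (range (L+1)).filter (fun M : ℕ => ¬ ((M : ℝ) < (L : ℝ) * q)), P M := by
        rw [sum_filter]
        exact sum_congr rfl fun M _ => by split_ifs with h <;> simp [h]
      rw [e2]
      have h := hsplit P
      rw [hPsum] at h
      linarith
  · intro M hM
    rw [hS' (fun M' => binomPmf L p M') M hM, ← hbnorm, hr]
    by_cases h : (M : ℝ) < (L : ℝ) * q
    · rw [if_pos h, if_pos h, div_mul_cancel₀ _ hbne, add_zero]
    · rw [if_neg h, if_neg h, div_mul_cancel₀ _ hbne]
      ring
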